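/- Suppose that J is injective, that K : X → W is a bounded conjugate-linear operator satisfying (J z)(K Y) = ⟨I Y, z⟩ for all z ∈ H and Y ∈ X, and that (T Y)(K Y) = 0 implies Y = 0 for Y ∈ X. Then: (i) the relation T• is single-valued, i.e. if Y ∈ X satisfies I Y = 0 and T Y = J z for some z ∈ H, then z = 0; (ii) if moreover T is a Fredholm operator of index 0 (finite-dimensional kernel, closed range whose codimension is finite and equals the dimension of the kernel), then T is bijective with bounded inverse, the set { I(T⁻¹(J z)) : z ∈ H } is dense in H, and in particular the domain { y ∈ H : (y,z) belongs to the graph of T• for some z } is dense in H. -/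

import Mathlib

noncomputable section

/-- `T` is a Fredholm operator of index `0`: finite-dimensional kernel, closed range
whose (finite) codimension equals the dimension of the kernel. -/
def FredholmIndexZero {X D : Type*}
    [NormedAddCommGroup X] [NormedSpace ℂ X]
    [NormedAddCommGroup D] [NormedSpace ℂ D] (T : X →L[ℂ] D) : Prop :=
  FiniteDimensional ℂ (LinearMap.ker (T : X →ₗ[ℂ] D)) ∧
  IsClosed (LinearMap.range (T : X →ₗ[ℂ] D) : Set D) ∧
  FiniteDimensional ℂ (D ⧸ LinearMap.range (T : X →ₗ[ℂ] D)) ∧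
  Module.finrank ℂ (D ⧸ LinearMap.range (T : X →ₗ[ℂ] D)) = Module.finrank ℂ (LinearMap.ker (T : X →ₗ[ℂ] D))

theorem stmt11 {H X W : Type*}
    [NormedAddCommGroup H] [InnerProductSpace ℂ H] [CompleteSpace H]
    [NormedAddCommGroup X] [NormedSpace ℂ X] [CompleteSpace X]
    [NormedAddCommGroup W] [NormedSpace ℂ W] [CompleteSpace W]
    (T : X →L[ℂ] (W →L[ℂ] ℂ)) (I : X →L[ℂ] H) (J : H →L[ℂ] (W →L[ℂ] ℂ))
    (hJinj : Function.Injective J)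
    (K : X →SL[starRingEnd ℂ] W)
    (hK : ∀ (z : H) (Y : X), (J z) (K Y) = (inner ℂ (I Y) z : ℂ))
    (hT0 : ∀ Y : X, (T Y) (K Y) = 0 → Y = 0) :
    -- (i) the relation `T•` is single-valued:
    (∀ (Y : X) (z : H), I Y = 0 → T Y = J z → z = 0) ∧
    -- (ii) if moreover `T` is Fredholm of index 0:
    (FredholmIndexZero T →
      Function.Bijective T ∧
      ∃ Tinv : (W →L[ℂ] ℂ) →L[ℂ] X,
        (∀ F : W →L[ℂ] ℂ, T (Tinv F) = F) ∧ (∀ Y : X, Tinv (T Y) = Y) ∧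
        Dense {h : H | ∃ z : H, h = I (Tinv (J z))} ∧
        Dense {y : H | ∃ (z : H) (Y : X), I Y = y ∧ T Y = J z}) := by

  constructor
  · intro Y z hIY hTY
    have hY : Y = 0 := hT0 Y (by rw [hTY, hK z Y, hIY]; simp)
    exact hJinj (by rw [← hTY, hY, map_zero, map_zero])
  · rintro ⟨hker, hclosed, hfin, hdim⟩
    have hTinj : Function.Injective T := by
      intro a b hab
      have h1 : T (a - b) = 0 := by rw [map_sub, hab, sub_self]
      have h2 : a - b = 0 := hT0 (a - b) (by rw [h1]; rfl)
      exact sub_eq_zero.mp h2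
    have hkerbot : LinearMap.ker (T : X →ₗ[ℂ] (W →L[ℂ] ℂ)) = ⊥ := LinearMap.ker_eq_bot.2 hTinj
    have h0 : Module.finrank ℂ ((W →L[ℂ] ℂ) ⧸ LinearMap.range (T : X →ₗ[ℂ] (W →L[ℂ] ℂ))) = 0 := by
      rw [hdim, hkerbot, finrank_bot]
    haveI : NoZeroSMulDivisors ℂ ((W →L[ℂ] ℂ) ⧸ LinearMap.range (T : X →ₗ[ℂ] (W →L[ℂ] ℂ))) :=
      inferInstance
    haveI hsub : Subsingleton ((W →L[ℂ] ℂ) ⧸ LinearMap.range (T : X →ₗ[ℂ] (W →L[ℂ] ℂ))) :=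
      Module.finrank_zero_iff.mp h0
    have hrtop : LinearMap.range (T : X →ₗ[ℂ] (W →L[ℂ] ℂ)) = ⊤ :=
      Submodule.Quotient.subsingleton_iff.mp hsub
    have hTsurj : Function.Surjective T := LinearMap.range_eq_top.mp hrtop
    set e := ContinuousLinearEquiv.ofBijective T hkerbot hrtop with he
    have heT : ∀ x : X, e x = T x := fun x => rfl
    refine ⟨⟨hTinj, hTsurj⟩, e.symm.toContinuousLinearMap, ?_, ?_, ?_, ?_⟩
    · intro F
      exact e.apply_symm_apply F
    · intro Y
      exact e.symm_apply_apply Y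
    · -- density of the first set
      set M : H →L[ℂ] H := I.comp (e.symm.toContinuousLinearMap.comp J) with hM
      have hTM : ∀ z : H, T (e.symm (J z)) = J z := fun z => by
        have := e.apply_symm_apply (J z); rwa [heT] at this
      have horth : (LinearMap.range (M : H →ₗ[ℂ] H))ᗮ = ⊥ := by
        rw [Submodule.eq_bot_iff]
        intro u hu
        have hu' : (inner ℂ (M u) u : ℂ) = 0 :=
          hu (M u) (LinearMap.mem_range.mpr ⟨u, rfl⟩)
        set Y := e.symm (J u) with hY
        have hMu : M u = I Y := rfl
        have hTYKY : (T Y) (K Y) = 0 := by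
          rw [hTM u, hK u Y, ← hMu]; exact hu'
        have hY0 : Y = 0 := hT0 Y hTYKY
        have : J u = 0 := by rw [← hTM u, ← hY, hY0, map_zero]
        exact hJinj (by rw [this, map_zero])
      have hdense : Dense ((LinearMap.range (M : H →ₗ[ℂ] H) : Submodule ℂ H) : Set H) := by
        rw [Submodule.dense_iff_topologicalClosure_eq_top,
          Submodule.topologicalClosure_eq_top_iff]
        exact horth
      have hsetEq : {h : H | ∃ z : H, h = I (e.symm.toContinuousLinearMap (J z))} =
          ((LinearMap.range (M : H →ₗ[ℂ] H) : Submodule ℂ H) : Set H) := by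
        ext h
        simp only [Set.mem_setOf_eq, SetLike.mem_coe, LinearMap.mem_range]
        constructor
        · rintro ⟨z, hz⟩; exact ⟨z, hz.symm⟩
        · rintro ⟨z, hz⟩; exact ⟨z, hz.symm⟩
      rw [hsetEq]
      exact hdense
    · -- density of the second set
      set M : H →L[ℂ] H := I.comp (e.symm.toContinuousLinearMap.comp J) with hM
      have hTM : ∀ z : H, T (e.symm (J z)) = J z := fun z => by
        have := e.apply_symm_apply (J z); rwa [heT] at this
      have horth : (LinearMap.range (M : H →ₗ[ℂ] H))ᗮ = ⊥ := by
        rw [Submodule.eq_bot_iff]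
        intro u hu
        have hu' : (inner ℂ (M u) u : ℂ) = 0 :=
          hu (M u) (LinearMap.mem_range.mpr ⟨u, rfl⟩)
        set Y := e.symm (J u) with hY
        have hMu : M u = I Y := rfl
        have hTYKY : (T Y) (K Y) = 0 := by
          rw [hTM u, hK u Y, ← hMu]; exact hu'
        have hY0 : Y = 0 := hT0 Y hTYKY
        have : J u = 0 := by rw [← hTM u, ← hY, hY0, map_zero]
        exact hJinj (by rw [this, map_zero])
      have hdense : Dense ((LinearMap.range (M : H →ₗ[ℂ] H) : Submodule ℂ H) : Set H) := by
        rw [Submodule.dense_iff_topologicalClosure_eq_top,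
          Submodule.topologicalClosure_eq_top_iff]
        exact horth
      refine hdense.mono ?_
      rintro h hh
      obtain ⟨z, hz⟩ := LinearMap.mem_range.mp hh
      exact ⟨z, e.symm (J z), hz, hTM z⟩
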